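/- Let d be the code distance of the polynomial remainder code with moduli m_1(x), …, m_L(x). Let a(x) ∈ F[x] with deg(a) < deg(M), and for each i ∈ {1, …, L} let ã_i(x) ∈ F[x] satisfy deg(ã_i) < deg(m_i); set e_i(x) = ã_i(x) − [a]_{m_i}(x). Call a pair {i, j} with i ≠ j a failed consistency check if gcd(m_i(x), m_j(x)) does not divide ã_i(x) − ã_j(x). If the number of indices i with e_i(x) ≠ 0 is at most ⌊(d−1)/2⌋, then: (i) every index i with e_i(x) ≠ 0 belongs to at least ⌈(d−1)/2⌉ + 1 failed consistency checks; and (ii) every index i with e_i(x) = 0 belongs to at most ⌊(d−1)/2⌋ failed consistency checks. -/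

import Mathlib

open Polynomial
open scoped Classical
/-- The code distance of the polynomial remainder code with moduli `m i`, `i ∈ s`. -/
noncomputable def codeDist {F : Type*} [Field F] {ι : Type*} (s : Finset ι)
    (m : ι → Polynomial F) : ℕ :=
  sInf {k | ∃ a : Polynomial F, a ≠ 0 ∧ a.degree < (s.lcm m).degree ∧
    (s.filter fun i => ¬ m i ∣ a).card = k}


private lemma mk_gcd_eq {α : Type*} [CommMonoidWithZero α] [GCDMonoid α]
    [UniqueFactorizationMonoid α] (x y : α) :
    Associates.mk (gcd x y) = Associates.mk x ⊓ Associates.mk y := by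
  apply le_antisymm
  · exact le_inf (Associates.mk_le_mk_of_dvd (gcd_dvd_left x y))
      (Associates.mk_le_mk_of_dvd (gcd_dvd_right x y))
  · obtain ⟨z, hz⟩ := Associates.exists_rep (Associates.mk x ⊓ Associates.mk y)
    rw [← hz]
    exact Associates.mk_le_mk_of_dvd (dvd_gcd
      (Associates.dvd_of_mk_le_mk (le_trans (le_of_eq hz) inf_le_left))
      (Associates.dvd_of_mk_le_mk (le_trans (le_of_eq hz) inf_le_right)))

private lemma mk_lcm_eq {α : Type*} [CommMonoidWithZero α] [GCDMonoid α]
    [UniqueFactorizationMonoid α] (x y : α) :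
    Associates.mk (lcm x y) = Associates.mk x ⊔ Associates.mk y := by
  apply le_antisymm
  · obtain ⟨z, hz⟩ := Associates.exists_rep (Associates.mk x ⊔ Associates.mk y)
    rw [← hz]
    exact Associates.mk_le_mk_of_dvd (lcm_dvd
      (Associates.dvd_of_mk_le_mk (le_trans le_sup_left (le_of_eq hz.symm)))
      (Associates.dvd_of_mk_le_mk (le_trans le_sup_right (le_of_eq hz.symm))))
  · exact sup_le (Associates.mk_le_mk_of_dvd (dvd_lcm_left x y))
      (Associates.mk_le_mk_of_dvd (dvd_lcm_right x y))

private lemma assoc_inf_sup {α : Type*} [CommMonoidWithZero α] [IsCancelMulZero α]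
    [UniqueFactorizationMonoid α] [Nontrivial α] (a b c : Associates α) :
    a ⊓ (b ⊔ c) ≤ (a ⊓ b) ⊔ (a ⊓ c) := by
  classical
  have hinf : ∀ x y : Associates α, x.factors ⊓ y.factors ≤ (x ⊓ y).factors := by
    intro x y
    have h1 : (x.factors ⊓ y.factors).prod ≤ x ⊓ y := by
      refine le_inf ?_ ?_
      · calc (x.factors ⊓ y.factors).prod ≤ x.factors.prod :=
              Associates.prod_mono inf_le_left
          _ = x := x.factors_prod
      · calc (x.factors ⊓ y.factors).prod ≤ y.factors.prod :=
              Associates.prod_mono inf_le_right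
          _ = y := y.factors_prod
    have h2 := Associates.factors_mono h1
    rwa [Associates.prod_factors] at h2
  have hsup : ∀ x y : Associates α, (x ⊔ y).factors ≤ x.factors ⊔ y.factors := by
    intro x y
    have h1 : x ⊔ y ≤ (x.factors ⊔ y.factors).prod := by
      refine sup_le ?_ ?_
      · calc x = x.factors.prod := x.factors_prod.symm
          _ ≤ _ := Associates.prod_mono le_sup_left
      · calc y = y.factors.prod := y.factors_prod.symm
          _ ≤ _ := Associates.prod_mono le_sup_right
    have h2 := Associates.factors_mono h1
    rwa [Associates.prod_factors] at h2
  rw [← Associates.factors_le]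
  calc (a ⊓ (b ⊔ c)).factors
      ≤ a.factors ⊓ (b ⊔ c).factors :=
        le_inf (Associates.factors_mono inf_le_left) (Associates.factors_mono inf_le_right)
    _ ≤ a.factors ⊓ (b.factors ⊔ c.factors) := inf_le_inf_left _ (hsup b c)
    _ = (a.factors ⊓ b.factors) ⊔ (a.factors ⊓ c.factors) := inf_sup_left _ _ _
    _ ≤ (a ⊓ b).factors ⊔ (a ⊓ c).factors := sup_le_sup (hinf a b) (hinf a c)
    _ ≤ ((a ⊓ b) ⊔ (a ⊓ c)).factors :=
        sup_le (Associates.factors_mono le_sup_left) (Associates.factors_mono le_sup_right)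

private lemma gcd_lcm_dvd2 {F : Type*} [Field F] {a b c E : Polynomial F}
    (hb : gcd a b ∣ E) (hc : gcd a c ∣ E) : gcd a (lcm b c) ∣ E := by
  have h := assoc_inf_sup (Associates.mk a) (Associates.mk b) (Associates.mk c)
  rw [← mk_gcd_eq, ← mk_gcd_eq, ← mk_lcm_eq, ← mk_gcd_eq] at h
  have h2 : Associates.mk (gcd a b) ⊔ Associates.mk (gcd a c) ≤ Associates.mk E :=
    sup_le (Associates.mk_le_mk_of_dvd hb) (Associates.mk_le_mk_of_dvd hc)
  exact Associates.dvd_of_mk_le_mk (le_trans h h2)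

private lemma gcd_finsetLcm_dvd {F : Type*} [Field F] {ι : Type*} {s : Finset ι}
    {m : ι → Polynomial F} {a E : Polynomial F}
    (h : ∀ j ∈ s, gcd a (m j) ∣ E) : gcd a (s.lcm m) ∣ E := by
  classical
  induction s using Finset.induction with
  | empty =>
      simp only [Finset.lcm_empty]
      exact dvd_trans (gcd_dvd_right a 1) (one_dvd E)
  | @insert j s hj ih =>
      rw [Finset.lcm_insert]
      exact gcd_lcm_dvd2 (h j (Finset.mem_insert_self j s))
        (ih fun k hk => h k (Finset.mem_insert_of_mem hk))

/-- If at most `⌊(d−1)/2⌋` residues are in error, then every erroneous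
residue appears in at least `⌈(d−1)/2⌉ + 1` failed consistency checks, and every
correct residue appears in at most `⌊(d−1)/2⌋` failed consistency checks.
Here `r i` are the received residues and `e i` the residue errors. -/
theorem stmt3 {F : Type*} [Field F] {L : ℕ} (hL : 2 ≤ L)
    (m : Fin L → Polynomial F)
    (hmonic : ∀ i, (m i).Monic)
    (hdist : Function.Injective m)
    (hdeg : ∀ i, 0 < (m i).degree)
    (d : ℕ) (hd : d = codeDist Finset.univ m)
    (a : Polynomial F) (ha : a.degree < (Finset.univ.lcm m).degree)
    (r : Fin L → Polynomial F)
    (hr : ∀ i, (r i).degree < (m i).degree)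
    (e : Fin L → Polynomial F)
    (he : ∀ i, e i = r i - a %ₘ m i)
    (herrs : (Finset.univ.filter fun i => e i ≠ 0).card ≤ (d - 1) / 2) :
    (∀ i, e i ≠ 0 →
      ((d - 1) + 1) / 2 + 1 ≤
        (Finset.univ.filter fun j =>
          j ≠ i ∧ ¬ gcd (m i) (m j) ∣ r i - r j).card) ∧
    (∀ i, e i = 0 →
      (Finset.univ.filter fun j =>
        j ≠ i ∧ ¬ gcd (m i) (m j) ∣ r i - r j).card ≤ (d - 1) / 2) := by
  have hM0 : Finset.univ.lcm m ≠ 0 := by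
    intro h
    rw [h, degree_zero] at ha
    exact not_lt_bot ha
  have hdvdM : ∀ i, m i ∣ Finset.univ.lcm m := fun i => Finset.dvd_lcm (Finset.mem_univ i)
  have hmem : ∀ u : Polynomial F, u ≠ 0 → u.degree < (Finset.univ.lcm m).degree →
      d ≤ (Finset.univ.filter fun k => ¬ m k ∣ u).card := by
    intro u h1 h2
    rw [hd]
    exact Nat.sInf_le ⟨u, h1, h2, rfl⟩
  have i0 : Fin L := ⟨0, by omega⟩
  have hMdeg : (0 : WithBot ℕ) < (Finset.univ.lcm m).degree :=
    lt_of_lt_of_le (hdeg i0) (degree_le_of_dvd (hdvdM i0) hM0)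
  have hdmem : d ∈ {k | ∃ a0 : Polynomial F, a0 ≠ 0 ∧
      a0.degree < (Finset.univ.lcm m).degree ∧
      (Finset.univ.filter fun i => ¬ m i ∣ a0).card = k} := by
    rw [hd]
    exact Nat.sInf_mem ⟨_, 1, one_ne_zero, by rw [degree_one]; exact hMdeg, rfl⟩
  obtain ⟨a0, ha00, ha0deg, ha0card⟩ := hdmem
  have hd1 : 1 ≤ d := by
    rcases Nat.eq_zero_or_pos d with h0 | h
    · exfalso
      rw [h0, Finset.card_eq_zero] at ha0card
      have hall : ∀ i, m i ∣ a0 := by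
        intro i
        by_contra hni
        have hmemi : i ∈ Finset.univ.filter fun i => ¬ m i ∣ a0 :=
          Finset.mem_filter.mpr ⟨Finset.mem_univ i, hni⟩
        rw [ha0card] at hmemi
        exact absurd hmemi (Finset.notMem_empty i)
      have hMa : Finset.univ.lcm m ∣ a0 := Finset.lcm_dvd fun i _ => hall i
      exact absurd ha0deg (not_lt.mpr (degree_le_of_dvd hMa ha00))
    · exact h
  have hedeg : ∀ i, (e i).degree < (m i).degree := by
    intro i
    rw [he i]
    exact lt_of_le_of_lt (degree_sub_le _ _)
      (max_lt (hr i) (degree_modByMonic_lt a (hmonic i)))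
  have hiff : ∀ i j, (gcd (m i) (m j) ∣ r i - r j ↔ gcd (m i) (m j) ∣ e i - e j) := by
    intro i j
    have hi' : gcd (m i) (m j) ∣ a - a %ₘ m i :=
      dvd_trans (gcd_dvd_left _ _)
        ⟨a /ₘ m i, by rw [modByMonic_eq_sub_mul_div a (m i)]; ring⟩
    have hj' : gcd (m i) (m j) ∣ a - a %ₘ m j :=
      dvd_trans (gcd_dvd_right _ _)
        ⟨a /ₘ m j, by rw [modByMonic_eq_sub_mul_div a (m j)]; ring⟩
    have h1 : gcd (m i) (m j) ∣ a %ₘ m i - a %ₘ m j := by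
      have h2 := dvd_sub hj' hi'
      have h3 : (a - a %ₘ m j) - (a - a %ₘ m i) = a %ₘ m i - a %ₘ m j := by ring
      rwa [h3] at h2
    constructor
    · intro h
      have h2 : r i - r j - (a %ₘ m i - a %ₘ m j) = e i - e j := by
        rw [he i, he j]; ring
      rw [← h2]
      exact dvd_sub h h1
    · intro h
      have h3 : r i - r j = (e i - e j) + (a %ₘ m i - a %ₘ m j) := by
        rw [he i, he j]; ring
      rw [h3]
      exact dvd_add h h1
  have hTbound : ∀ i, e i ≠ 0 → ∀ T : Finset (Fin L),
      (∀ j ∈ T, gcd (m i) (m j) ∣ e i) → T.card + d ≤ L := by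
    intro i hei T hT
    have hgN : gcd (m i) (T.lcm m) ∣ e i := gcd_finsetLcm_dvd hT
    have hmiN : ¬ m i ∣ T.lcm m := by
      intro hdvd
      have h1 : m i ∣ e i := dvd_trans (dvd_gcd dvd_rfl hdvd) hgN
      exact absurd (hedeg i) (not_lt.mpr (degree_le_of_dvd h1 hei))
    have hN0 : T.lcm m ≠ 0 := fun h => hmiN (h ▸ dvd_zero (m i))
    have hNM : T.lcm m ∣ Finset.univ.lcm m := Finset.lcm_dvd fun j _ => hdvdM j
    have hNMdeg : (T.lcm m).degree < (Finset.univ.lcm m).degree := by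
      rcases lt_or_eq_of_le (degree_le_of_dvd hNM hM0) with h | h
      · exact h
      · exfalso
        obtain ⟨q, hq⟩ := hNM
        have hq0 : q ≠ 0 := by
          rintro rfl
          rw [mul_zero] at hq
          exact hM0 hq
        have hnd : (Finset.univ.lcm m).natDegree = (T.lcm m).natDegree + q.natDegree := by
          rw [hq]; exact natDegree_mul hN0 hq0
        have hnd2 : (T.lcm m).natDegree = (Finset.univ.lcm m).natDegree :=
          natDegree_eq_of_degree_eq h
        have hqd : q.natDegree = 0 := by omega
        obtain ⟨c, rfl⟩ := Polynomial.natDegree_eq_zero.mp hqd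
        have hc0 : c ≠ 0 := fun hcc => hq0 (by rw [hcc, map_zero])
        apply hmiN
        have hu : (C c : Polynomial F) ∣ 1 :=
          isUnit_iff_dvd_one.mp (isUnit_C.mpr (isUnit_iff_ne_zero.mpr hc0))
        have hMN : Finset.univ.lcm m ∣ T.lcm m := by
          calc Finset.univ.lcm m = T.lcm m * C c := hq
            _ ∣ T.lcm m * 1 := mul_dvd_mul_left _ hu
            _ = T.lcm m := mul_one _
        exact dvd_trans (hdvdM i) hMN
    have hcard := hmem (T.lcm m) hN0 hNMdeg
    have hsub : (Finset.univ.filter fun k => ¬ m k ∣ T.lcm m) ⊆ Finset.univ \ T := by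
      intro k hk
      rw [Finset.mem_filter] at hk
      rw [Finset.mem_sdiff]
      exact ⟨Finset.mem_univ k, fun hkT => hk.2 (Finset.dvd_lcm hkT)⟩
    have h2 := Finset.card_le_card hsub
    have h3 : (Finset.univ \ T).card = L - T.card := by
      rw [Finset.card_sdiff_of_subset (Finset.subset_univ T), Finset.card_univ, Fintype.card_fin]
    have h4 : T.card ≤ L := by
      calc T.card ≤ Finset.univ.card := Finset.card_le_card (Finset.subset_univ T)
        _ = L := by rw [Finset.card_univ, Fintype.card_fin]
    omega
  constructor
  · intro i hei
    have hT := hTbound i hei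
      (Finset.univ.filter fun j => e j = 0 ∧ gcd (m i) (m j) ∣ e i)
      (fun j hj => (Finset.mem_filter.mp hj).2.2)
    have hZsub : (Finset.univ.filter fun j => e j = 0) ⊆
        (Finset.univ.filter fun j => e j = 0 ∧ gcd (m i) (m j) ∣ e i) ∪
        (Finset.univ.filter fun j => j ≠ i ∧ ¬ gcd (m i) (m j) ∣ r i - r j) := by
      intro j hj
      rw [Finset.mem_filter] at hj
      by_cases hg : gcd (m i) (m j) ∣ e i
      · exact Finset.mem_union_left _ (Finset.mem_filter.mpr ⟨Finset.mem_univ j, hj.2, hg⟩)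
      · refine Finset.mem_union_right _ (Finset.mem_filter.mpr ⟨Finset.mem_univ j, ?_, ?_⟩)
        · rintro rfl
          exact hei hj.2
        · rw [hiff i j, hj.2, sub_zero]
          exact hg
    have hZcard := Finset.card_le_card hZsub
    have hunion := Finset.card_union_le
      (Finset.univ.filter fun j => e j = 0 ∧ gcd (m i) (m j) ∣ e i)
      (Finset.univ.filter fun j => j ≠ i ∧ ¬ gcd (m i) (m j) ∣ r i - r j)
    have hsplit : (Finset.univ.filter fun j => e j = 0).card +
        (Finset.univ.filter fun j => e j ≠ 0).card = L := by
      have h5 := Finset.card_filter_add_card_filter_not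
        (s := (Finset.univ : Finset (Fin L))) (p := fun j => e j = 0)
      simpa [Finset.card_univ, ne_eq] using h5
    have hE := herrs
    omega
  · intro i hei
    have hsub : (Finset.univ.filter fun j => j ≠ i ∧ ¬ gcd (m i) (m j) ∣ r i - r j) ⊆
        Finset.univ.filter fun j => e j ≠ 0 := by
      intro j hj
      rw [Finset.mem_filter] at hj ⊢
      refine ⟨Finset.mem_univ j, ?_⟩
      intro hej0
      apply hj.2.2
      rw [hiff i j, hei, hej0, sub_zero]
      exact dvd_zero _
    exact le_trans (Finset.card_le_card hsub) herrs
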